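/- There is an absolute constant c > 0 such that the following holds. Let S be a finite set of points in ℝ³ in which every two distinct points are at distance at least 2, let o ∈ S, and let r ≥ 1 be a real number. Then the number of points q ∈ S with dist(o,q) ≤ r that form a Delaunay edge of S with o is at most c·r². -/

import Mathlib

noncomputable section
open scoped Classical ENNReal Pointwise
open MeasureTheory Real

/-- Points of `ℝ³` as Euclidean space. -/
abbrev E3 : Type := EuclideanSpace ℝ (Fin 3)

/-- The point `(x, y, z) ∈ ℝ³`. -/
def mk3 (x y z : ℝ) : E3 := (WithLp.equiv 2 (Fin 3 → ℝ)).symm ![x, y, z]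

/-- `p` and `q` form a Delaunay edge of the finite set `S`: they are distinct points of `S`
lying on a sphere having no point of `S` in its interior. -/
def IsDelaunayEdge (S : Finset E3) (p q : E3) : Prop :=
  p ∈ S ∧ q ∈ S ∧ p ≠ q ∧
    ∃ (c : E3) (ρ : ℝ), 0 < ρ ∧ dist c p = ρ ∧ dist c q = ρ ∧ ∀ s ∈ S, ρ ≤ dist c s

/-- The number of (unordered) Delaunay edges of `S`. -/
def delaunayEdgeCount (S : Finset E3) : ℕ :=
  Set.ncard {pq : E3 × E3 | IsDelaunayEdge S pq.1 pq.2} / 2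

/-- The minimum pairwise distance of a finite point set. -/
def minPairDist (S : Finset E3) : ℝ :=
  sInf {d : ℝ | ∃ p ∈ S, ∃ q ∈ S, p ≠ q ∧ d = dist p q}

/-- The spread of a finite point set: diameter divided by minimum pairwise distance. -/
def spread (S : Finset E3) : ℝ := Metric.diam (S : Set E3) / minPairDist S
open scoped RealInnerProductSpace

/-! Helper lemmas -/

lemma norm_sq_coords (x : E3) : ‖x‖^2 = x 0^2 + x 1^2 + x 2^2 := by
  rw [EuclideanSpace.norm_eq]
  rw [Real.sq_sqrt (by positivity)]
  simp [Fin.sum_univ_three, sq_abs]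

lemma inner_coords (x y : E3) : ⟪x, y⟫ = x 0*y 0 + x 1*y 1 + x 2*y 2 := by
  simp [PiLp.inner_apply, Fin.sum_univ_three, RCLike.inner_apply, mul_comm]

lemma coord_sq_le (x : E3) (j : Fin 3) : x j ^ 2 ≤ ‖x‖^2 := by
  rw [norm_sq_coords]
  have h0 := sq_nonneg (x 0); have h1 := sq_nonneg (x 1); have h2 := sq_nonneg (x 2)
  match j with
  | 0 => linarith
  | 1 => linarith
  | 2 => linarith

lemma key_contra (ε τ Di Da Db Ui Ua Ub S : ℝ)
    (hτ : τ = ε/5) (hε : 0 < ε)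
    (hD : ε^2 ≤ Di^2+Da^2+Db^2)
    (hSle : S^2 ≤ (3/64)*(Di^2+Da^2+Db^2))
    (hSdef : S = Ui*Di + Ua*Da + Ub*Db)
    (hUi : 1/3 ≤ Ui^2) (hU : Ua^2 + Ub^2 ≤ 1)
    (ha : Da^2 < τ^2) (hb : Db^2 < τ^2) : False := by
  have e1 : (Ui*Di)^2 = (S - Ua*Da - Ub*Db)^2 := by rw [hSdef]; ring
  have h1 : (Ui*Di)^2 ≤ 3*S^2 + 3*(Ua*Da)^2 + 3*(Ub*Db)^2 := by
    rw [e1]; nlinarith [sq_nonneg (S + Ua*Da), sq_nonneg (S + Ub*Db), sq_nonneg (Ua*Da - Ub*Db)]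
  have h2 : (Ua*Da)^2 + (Ub*Db)^2 ≤ τ^2 := by
    have : (Ua*Da)^2 ≤ Ua^2 * τ^2 := by nlinarith [sq_nonneg Ua]
    have : (Ub*Db)^2 ≤ Ub^2 * τ^2 := by nlinarith [sq_nonneg Ub]
    nlinarith [sq_nonneg Ua, sq_nonneg Ub, sq_nonneg τ]
  have h3 : Di^2 ≤ 3*(Ui*Di)^2 := by nlinarith [sq_nonneg Di]
  have hτ2 : τ^2 = ε^2/25 := by rw [hτ]; ring
  have hε2 : 0 < ε^2 := by positivity
  linarith

lemma inv_dist_sq (v v' : E3) (hv : v ≠ 0) (hv' : v' ≠ 0) :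
    ‖(‖v‖^2)⁻¹ • v - (‖v'‖^2)⁻¹ • v'‖^2 = ‖v - v'‖^2 / (‖v‖^2 * ‖v'‖^2) := by
  have h1 : ‖v‖ ≠ 0 := norm_ne_zero_iff.mpr hv
  have h2 : ‖v'‖ ≠ 0 := norm_ne_zero_iff.mpr hv'
  rw [norm_sub_sq_real, norm_sub_sq_real, norm_smul, norm_smul,
    real_inner_smul_left, real_inner_smul_right]
  simp only [norm_inv, norm_pow, Real.norm_eq_abs, abs_norm]
  field_simp
  ring

lemma support_vec (S : Finset E3) (o q : E3) (hq : IsDelaunayEdge S o q) :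
    ∃ u : E3, ‖u‖ = 1 ∧ ∀ s ∈ S, s ≠ o →
      ⟪u, (‖s-o‖^2)⁻¹ • (s-o)⟫ ≤ ⟪u, (‖q-o‖^2)⁻¹ • (q-o)⟫ := by
  obtain ⟨hoS, hqS, hne, c, ρ, hρ, hco, hcq, hmin⟩ := hq
  have hcoe : ‖c - o‖ = ρ := by rwa [← dist_eq_norm]
  have hhalf : ∀ s : E3, ρ ≤ dist c s → ⟪c - o, s - o⟫ ≤ ‖s - o‖^2 / 2 := by
    intro s hs
    have h1 : ρ^2 ≤ ‖c - s‖^2 := by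
      rw [← dist_eq_norm]
      have := dist_nonneg (x := c) (y := s)
      nlinarith
    have h2 : ‖c - s‖^2 = ‖(c-o) - (s-o)‖^2 := by norm_num
    rw [h2, norm_sub_sq_real, hcoe] at h1
    linarith
  have heq : ⟪c - o, q - o⟫ = ‖q - o‖^2 / 2 := by
    have h1 : ρ^2 = ‖c - q‖^2 := by rw [← dist_eq_norm, hcq]
    have h2 : ‖c - q‖^2 = ‖(c-o) - (q-o)‖^2 := by norm_num
    rw [h2, norm_sub_sq_real, hcoe] at h1
    linarith
  refine ⟨ρ⁻¹ • (c - o), ?_, ?_⟩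
  · rw [norm_smul, hcoe]
    simp [abs_of_pos hρ, inv_mul_cancel₀ hρ.ne']
  · intro s hsS hso
    have hsn : (0:ℝ) < ‖s - o‖^2 := by
      have h := sub_ne_zero_of_ne hso
      have := norm_pos_iff.mpr h
      positivity
    rw [real_inner_smul_left, real_inner_smul_left, real_inner_smul_right,
      real_inner_smul_right, heq]
    have h3 := hhalf s (hmin s hsS)
    have h4 : (‖s-o‖^2)⁻¹ * ⟪c - o, s - o⟫ ≤ 1/2 := by
      rw [inv_mul_le_iff₀ hsn]
      linarith [h3]
    have hqn : (0:ℝ) < ‖q - o‖^2 := by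
      have h := sub_ne_zero_of_ne (fun h => hne h.symm)
      have := norm_pos_iff.mpr h
      positivity
    have h5 : (‖q-o‖^2)⁻¹ * (‖q-o‖^2/2) = 1/2 := by
      rw [← mul_div_assoc, inv_mul_cancel₀ hqn.ne']
    rw [h5]
    have := inv_pos.mpr hρ
    nlinarith [h4]

/-- the two indices other than `i` -/
def pairOf : Fin 3 → Fin 3 × Fin 3
  | 0 => (1,2)
  | 1 => (0,2)
  | 2 => (0,1)

lemma perm_sum (i : Fin 3) (x : E3) :
    ‖x‖^2 = x i^2 + x (pairOf i).1^2 + x (pairOf i).2^2 := by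
  fin_cases i <;> rw [norm_sq_coords] <;> simp [pairOf] <;> ring

lemma perm_inner (i : Fin 3) (x y : E3) :
    ⟪x,y⟫ = x i * y i + x (pairOf i).1 * y (pairOf i).1 + x (pairOf i).2 * y (pairOf i).2 := by
  fin_cases i <;> rw [inner_coords] <;> simp [pairOf] <;> ring


set_option maxHeartbeats 2000000

/-- If every two distinct points of a finite set `S ⊆ ℝ³` are at distance at least `2`, then
any point `o ∈ S` has at most `c·r²` Delaunay neighbors at distance at most `r`. -/
theorem delaunay_nearby_degree_bound :
    ∃ c : ℝ, 0 < c ∧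
      ∀ S : Finset E3, (∀ p ∈ S, ∀ q ∈ S, p ≠ q → 2 ≤ dist p q) →
        ∀ o ∈ S, ∀ r : ℝ, 1 ≤ r →
          (Set.ncard {q : E3 | q ∈ S ∧ dist o q ≤ r ∧ IsDelaunayEdge S o q} : ℝ) ≤
            c * r ^ 2 := by
  refine ⟨10^8, by norm_num, ?_⟩
  intro S hsep o hoS r hr
  classical
  set N : Finset E3 := S.filter (fun q => dist o q ≤ r ∧ IsDelaunayEdge S o q) with hN
  have hsetN : {q : E3 | q ∈ S ∧ dist o q ≤ r ∧ IsDelaunayEdge S o q} = ↑N := by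
    ext q
    simp [hN, Finset.mem_filter]
  rw [hsetN, Set.ncard_coe_finset]
  set w : E3 → E3 := fun s => (‖s - o‖^2)⁻¹ • (s - o) with hw
  -- choose normal vectors
  have hux : ∀ q : E3, ∃ u : E3, ‖u‖ = 1 ∧
      (q ∈ N → ∀ s ∈ S, s ≠ o → ⟪u, w s⟫ ≤ ⟪u, w q⟫) := by
    intro q
    by_cases hq : q ∈ N
    · obtain ⟨u, hu1, hu2⟩ := support_vec S o q (Finset.mem_filter.mp hq).2.2
      exact ⟨u, hu1, fun _ => hu2⟩
    · refine ⟨EuclideanSpace.single 0 1, by simp, fun h => absurd h hq⟩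
  choose u hu1 husupp using hux
  -- basic facts
  have hbasic : ∀ q ∈ N, q ∈ S ∧ q ≠ o ∧ 2 ≤ ‖q - o‖ ∧ ‖q - o‖ ≤ r := by
    intro q hq
    obtain ⟨hqS, hdr, hdel⟩ := Finset.mem_filter.mp hq
    have hqo : q ≠ o := Ne.symm hdel.2.2.1
    refine ⟨hqS, hqo, ?_, ?_⟩
    · have := hsep q hqS o hoS hqo
      rwa [dist_eq_norm] at this
    · rw [← dist_eq_norm, dist_comm]; exact hdr
  set K : ℕ := Nat.log 2 ⌊r⌋₊ with hK
  set kf : E3 → ℕ := fun q => Nat.log 2 ⌊‖q - o‖⌋₊ with hkf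
  -- dyadic bounds
  have hdyadic : ∀ q ∈ N, (2:ℝ)^(kf q) ≤ ‖q - o‖ ∧ ‖q - o‖ < 2^(kf q + 1) ∧ kf q ≤ K := by
    intro q hq
    obtain ⟨_, _, h2, hrle⟩ := hbasic q hq
    have hn2 : 2 ≤ ⌊‖q - o‖⌋₊ := Nat.le_floor (by exact_mod_cast h2)
    have hn0 : ⌊‖q - o‖⌋₊ ≠ 0 := by omega
    refine ⟨?_, ?_, ?_⟩
    · calc ((2:ℝ))^(kf q) = ((2^(kf q) : ℕ) : ℝ) := by push_cast; ring
        _ ≤ (⌊‖q - o‖⌋₊ : ℝ) := by exact_mod_cast Nat.pow_log_le_self 2 hn0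
        _ ≤ ‖q - o‖ := Nat.floor_le (by positivity)
    · have h1 : ‖q - o‖ < ⌊‖q - o‖⌋₊ + 1 := Nat.lt_floor_add_one _
      have h2' : ⌊‖q - o‖⌋₊ + 1 ≤ 2^(kf q + 1) :=
        Nat.lt_pow_succ_log_self (by norm_num) _
      calc ‖q - o‖ < (⌊‖q - o‖⌋₊ : ℝ) + 1 := h1
        _ ≤ ((2^(kf q + 1) : ℕ) : ℝ) := by exact_mod_cast h2'
        _ = (2:ℝ)^(kf q + 1) := by push_cast; ring
    · exact Nat.log_mono_right (Nat.floor_mono hrle)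
  -- index of a big coordinate of u
  set ist : E3 → Fin 3 := fun q =>
    if 1/3 ≤ (u q 0)^2 then 0 else if 1/3 ≤ (u q 1)^2 then 1 else 2 with hist
  have histar : ∀ q : E3, 1/3 ≤ (u q (ist q))^2 := by
    intro q
    have hsum : (u q 0)^2 + (u q 1)^2 + (u q 2)^2 = 1 := by
      have := norm_sq_coords (u q)
      rw [hu1 q] at this
      linarith [this.symm]
    rw [hist]
    dsimp only
    by_cases h0 : 1/3 ≤ (u q 0)^2
    · rw [if_pos h0]; exact h0
    · rw [if_neg h0]
      by_cases h1 : 1/3 ≤ (u q 1)^2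
      · rw [if_pos h1]; exact h1
      · rw [if_neg h1]; push_neg at h0 h1; linarith
  set lab : E3 → ℤ × ℤ × ℤ := fun q => (⌊8 * u q 0⌋, ⌊8 * u q 1⌋, ⌊8 * u q 2⌋) with hlab
  set cel : E3 → ℤ × ℤ := fun q =>
    (⌊w q (pairOf (ist q)).1 * (10 * 4^(kf q))⌋,
     ⌊w q (pairOf (ist q)).2 * (10 * 4^(kf q))⌋) with hcel
  -- fiberwise counting
  have coordabs : ∀ (x : E3) (j : Fin 3), |x j| ≤ ‖x‖ := by
    intro x j
    rw [← Real.sqrt_sq_eq_abs, ← Real.sqrt_sq (norm_nonneg x)]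
    exact Real.sqrt_le_sqrt (coord_sq_le x j)
  have hfiber : ∀ k : ℕ,
      (N.filter fun q => kf q = k).card ≤ 14739 * (20 * 2^k + 1)^2 := by
    intro k
    set L : ℤ := ((10 * 2^k : ℕ) : ℤ) with hL
    set F := ((Finset.Icc (-8:ℤ) 8 ×ˢ Finset.Icc (-8:ℤ) 8 ×ˢ Finset.Icc (-8:ℤ) 8) ×ˢ
      ((Finset.univ : Finset (Fin 3)) ×ˢ (Finset.Icc (-L) L ×ˢ Finset.Icc (-L) L))) with hF
    have hcardF : F.card = 14739 * (20 * 2^k + 1)^2 := by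
      have c17 : (Finset.Icc (-8:ℤ) 8).card = 17 := by rw [Int.card_Icc]; rfl
      have cL : (Finset.Icc (-L) L).card = 20 * 2^k + 1 := by
        rw [Int.card_Icc, hL]
        have he : ((10 * 2^k : ℕ) : ℤ) + 1 - -((10 * 2^k : ℕ) : ℤ)
            = ((20 * 2^k + 1 : ℕ) : ℤ) := by push_cast; ring
        rw [he, Int.toNat_natCast]
      rw [hF]
      simp only [Finset.card_product, c17, cL, Finset.card_univ, Fintype.card_fin]
      ring
    rw [← hcardF]
    apply Finset.card_le_card_of_injOn (fun q => (lab q, ist q, cel q))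
    · -- maps into F
      intro q hq
      obtain ⟨hqN, hkq⟩ := Finset.mem_filter.mp hq
      obtain ⟨hqS, hqo, h2q, _⟩ := hbasic q hqN
      obtain ⟨hlo, _, _⟩ := hdyadic q hqN
      rw [hkq] at hlo
      have hu2 : ∀ j : Fin 3, (u q j)^2 ≤ 1 := by
        intro j
        have h := coord_sq_le (u q) j
        rwa [hu1 q, one_pow] at h
      have hulab : ∀ j : Fin 3, -8 ≤ ⌊8 * u q j⌋ ∧ ⌊8 * u q j⌋ ≤ 8 := by
        intro j
        have h := hu2 j
        have hm1 : -1 ≤ u q j := by nlinarith [sq_nonneg (u q j + 1)]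
        have hp1 : u q j ≤ 1 := by nlinarith [sq_nonneg (u q j - 1)]
        constructor
        · apply Int.le_floor.mpr; push_cast; linarith
        · have h1 : (⌊8 * u q j⌋ : ℝ) ≤ 8 * u q j := Int.floor_le _
          have h2 : (⌊8 * u q j⌋ : ℝ) ≤ ((8:ℤ):ℝ) := by push_cast; linarith
          exact_mod_cast h2
      -- cell bounds
      have hv0 : q - o ≠ 0 := sub_ne_zero_of_ne hqo
      have hvpos : (0:ℝ) < ‖q - o‖ := norm_pos_iff.mpr hv0
      have hwn : ‖w q‖ = ‖q - o‖⁻¹ := by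
        rw [hw]
        dsimp only
        rw [norm_smul]
        simp only [norm_inv, norm_pow, Real.norm_eq_abs, abs_norm]
        field_simp
      have h2kpos : (0:ℝ) < 2^k := by positivity
      have hwk : ‖w q‖ * 2^k ≤ 1 := by
        rw [hwn]
        have h := mul_le_mul_of_nonneg_left hlo
          (by positivity : (0:ℝ) ≤ ‖q - o‖⁻¹)
        rwa [inv_mul_cancel₀ hvpos.ne'] at h
      have h4k2 : (4:ℝ)^k = 2^k * 2^k := by
        rw [(by norm_num : (4:ℝ) = 2*2), mul_pow]
      have hcellb : ∀ j : Fin 3, -L ≤ ⌊w q j * (10 * 4^(kf q))⌋ ∧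
          ⌊w q j * (10 * 4^(kf q))⌋ ≤ L := by
        intro j
        rw [hkq]
        have habs : |w q j| ≤ ‖w q‖ := coordabs _ _
        have hb : |w q j * (10 * 4^k)| ≤ (L:ℝ) := by
          rw [abs_mul, abs_of_pos (by positivity : (0:ℝ) < 10 * 4^k)]
          have hLr : (L:ℝ) = 10 * 2^k := by rw [hL]; push_cast; ring
          rw [hLr, h4k2]
          calc |w q j| * (10 * (2^k * 2^k)) = (|w q j| * 2^k) * (10 * 2^k) := by ring
            _ ≤ (‖w q‖ * 2^k) * (10 * 2^k) := by
                apply mul_le_mul_of_nonneg_right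
                  (mul_le_mul_of_nonneg_right habs (le_of_lt h2kpos)) (by positivity)
            _ ≤ 1 * (10 * 2^k) := by
                apply mul_le_mul_of_nonneg_right hwk (by positivity)
            _ = 10 * 2^k := by ring
        have hb' := abs_le.mp hb
        constructor
        · apply Int.le_floor.mpr; push_cast at hb' ⊢; linarith [hb'.1]
        · have h1 : (⌊w q j * (10 * 4^k)⌋ : ℝ) ≤ w q j * (10*4^k) := Int.floor_le _
          have h2 : (⌊w q j * (10 * 4^k)⌋ : ℝ) ≤ (L:ℝ) := le_trans h1 hb'.2
          exact_mod_cast h2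
      simp only [hF, Finset.mem_coe, Finset.mem_product, Finset.mem_Icc, Finset.mem_univ]
      refine ⟨⟨⟨(hulab 0).1, (hulab 0).2⟩, ⟨(hulab 1).1, (hulab 1).2⟩,
        ⟨(hulab 2).1, (hulab 2).2⟩⟩, trivial, ?_, ?_⟩
      · exact hcellb _
      · exact hcellb _
    · -- injectivity
      intro q hq q' hq' heq
      by_contra hne
      simp only [Finset.mem_coe] at hq hq'
      obtain ⟨hqN, hkq⟩ := Finset.mem_filter.mp hq
      obtain ⟨hq'N, hkq'⟩ := Finset.mem_filter.mp hq'
      obtain ⟨hqS, hqo, h2q, _⟩ := hbasic q hqN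
      obtain ⟨hq'S, hq'o, h2q', _⟩ := hbasic q' hq'N
      obtain ⟨hlo, hhi, _⟩ := hdyadic q hqN
      obtain ⟨hlo', hhi', _⟩ := hdyadic q' hq'N
      rw [hkq] at hlo hhi
      rw [hkq'] at hlo' hhi'
      have hlabeq : lab q = lab q' := congrArg Prod.fst heq
      have histeq : ist q = ist q' := congrArg (fun p => p.2.1) heq
      have hceleq : cel q = cel q' := congrArg (fun p => p.2.2) heq
      set i := ist q with hidef
      set Δ : E3 := w q - w q' with hΔ
      have hv0 : q - o ≠ 0 := sub_ne_zero_of_ne hqo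
      have hv0' : q' - o ≠ 0 := sub_ne_zero_of_ne hq'o
      have hvpos : (0:ℝ) < ‖q - o‖ := norm_pos_iff.mpr hv0
      have hvpos' : (0:ℝ) < ‖q' - o‖ := norm_pos_iff.mpr hv0'
      have hqq : 2 ≤ ‖q - q'‖ := by
        have := hsep q hqS q' hq'S hne
        rwa [dist_eq_norm] at this
      have hDid : ‖Δ‖^2 = ‖q - q'‖^2 / (‖q - o‖^2 * ‖q' - o‖^2) := by
        rw [hΔ, hw]
        dsimp only
        rw [inv_dist_sq _ _ hv0 hv0', sub_sub_sub_cancel_right]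
      have h2kp : (0:ℝ) < (2:ℝ)^(k+1) := by positivity
      have hεD : ((1:ℝ)/(2*4^k))^2 ≤ ‖Δ‖^2 := by
        rw [hDid]
        have h4 : (4:ℝ) ≤ ‖q - q'‖^2 := by nlinarith
        have hb1 : ‖q - o‖^2 ≤ (2:ℝ)^(k+1) * 2^(k+1) := by nlinarith
        have hb2 : ‖q' - o‖^2 ≤ (2:ℝ)^(k+1) * 2^(k+1) := by nlinarith
        have hdpos : (0:ℝ) < ‖q - o‖^2 * ‖q' - o‖^2 := by positivity
        have hprod : ‖q - o‖^2 * ‖q' - o‖^2 ≤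
            ((2:ℝ)^(k+1) * 2^(k+1)) * ((2:ℝ)^(k+1) * 2^(k+1)) := by
          apply mul_le_mul hb1 hb2 (sq_nonneg _) (by positivity)
        have hstep : (4:ℝ) / (((2:ℝ)^(k+1) * 2^(k+1)) * ((2:ℝ)^(k+1) * 2^(k+1))) ≤
            ‖q - q'‖^2 / (‖q - o‖^2 * ‖q' - o‖^2) :=
          div_le_div₀ (by positivity) h4 hdpos hprod
        refine le_trans (le_of_eq ?_) hstep
        have h1 : (2:ℝ)^(k+1) = 2 * 2^k := by ring
        have h2 : (4:ℝ)^k = 2^k * 2^k := by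
          rw [(by norm_num : (4:ℝ) = 2*2), mul_pow]
        rw [h1, h2]
        have h2kpos : (0:ℝ) < 2^k := by positivity
        field_simp
        ring
      -- support inequalities
      have hs1 : ⟪u q, w q'⟫ ≤ ⟪u q, w q⟫ := husupp q hqN q' hq'S hq'o
      have hs2 : ⟪u q', w q⟫ ≤ ⟪u q', w q'⟫ := husupp q' hq'N q hqS hqo
      set Sv : ℝ := ⟪u q, Δ⟫ with hSv
      have hS0 : 0 ≤ Sv := by rw [hSv, hΔ, inner_sub_right]; linarith
      have hSup : Sv ≤ ‖u q - u q'‖ * ‖Δ‖ := by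
        have h1 : ⟪u q', Δ⟫ ≤ 0 := by rw [hΔ, inner_sub_right]; linarith
        have h2 : Sv ≤ ⟪u q - u q', Δ⟫ := by
          rw [hSv]
          rw [inner_sub_left]
          linarith
        exact le_trans h2 (real_inner_le_norm _ _)
      have hucl : ‖u q - u q'‖^2 ≤ 3/64 := by
        have hjj : ∀ j : Fin 3, ⌊8 * u q j⌋ = ⌊8 * u q' j⌋ →
            (u q j - u q' j)^2 ≤ 1/64 := by
          intro j hfl
          have h8 := abs_lt.mp (Int.abs_sub_lt_one_of_floor_eq_floor hfl)
          nlinarith [h8.1, h8.2]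
        have hl0 := hjj 0 (congrArg (fun p => p.1) hlabeq)
        have hl1 := hjj 1 (congrArg (fun p => p.2.1) hlabeq)
        have hl2 := hjj 2 (congrArg (fun p => p.2.2) hlabeq)
        have hexp : ‖u q - u q'‖^2 = (u q 0 - u q' 0)^2 + (u q 1 - u q' 1)^2
            + (u q 2 - u q' 2)^2 := by
          rw [norm_sq_coords]; rfl
        rw [hexp]; linarith
      have hSle : Sv^2 ≤ (3/64) * ‖Δ‖^2 := by
        nlinarith [norm_nonneg Δ, norm_nonneg (u q - u q'), hSup, hS0, hucl,
          mul_self_nonneg (‖u q - u q'‖ * ‖Δ‖)]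
      -- cell closeness
      have hcell : ∀ x y : ℝ, ⌊x * (10 * 4^k)⌋ = ⌊y * (10 * 4^k)⌋ →
          (x - y)^2 < ((1:ℝ)/(10*4^k))^2 := by
        intro x y hfl
        have h1 := abs_lt.mp (Int.abs_sub_lt_one_of_floor_eq_floor hfl)
        have hM : (0:ℝ) < 10 * 4^k := by positivity
        have hk2 : ((x-y) * (10*4^k))^2 < 1 := by nlinarith [h1.1, h1.2]
        have hM2 : (0:ℝ) < (10*4^k:ℝ)^2 := by positivity
        rw [div_pow, one_pow, lt_div_iff₀ hM2]
        nlinarith [hk2]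
      have hceq : (⌊w q (pairOf i).1 * (10 * 4^k)⌋, ⌊w q (pairOf i).2 * (10 * 4^k)⌋)
          = (⌊w q' (pairOf i).1 * (10 * 4^k)⌋, ⌊w q' (pairOf i).2 * (10 * 4^k)⌋) := by
        have h1 := hceleq
        rw [hcel] at h1
        dsimp only at h1
        rw [hkq, hkq', ← histeq, ← hidef] at h1
        exact h1
      have hca : (Δ (pairOf i).1)^2 < ((1:ℝ)/(10*4^k))^2 := by
        have h := hcell _ _ (congrArg Prod.fst hceq)
        have hΔa : Δ (pairOf i).1 = w q (pairOf i).1 - w q' (pairOf i).1 := rfl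
        rwa [hΔa]
      have hcb : (Δ (pairOf i).2)^2 < ((1:ℝ)/(10*4^k))^2 := by
        have h := hcell _ _ (congrArg Prod.snd hceq)
        have hΔb : Δ (pairOf i).2 = w q (pairOf i).2 - w q' (pairOf i).2 := rfl
        rwa [hΔb]
      -- assemble
      have hUi : 1/3 ≤ (u q i)^2 := histar q
      clear_value Sv Δ i
      have hDsum := perm_sum i Δ
      have hSdef : Sv = u q i * Δ i + u q (pairOf i).1 * Δ (pairOf i).1
          + u q (pairOf i).2 * Δ (pairOf i).2 := by
        rw [hSv]; exact perm_inner i (u q) Δ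
      have hUsum := perm_sum i (u q)
      rw [hu1 q, one_pow] at hUsum
      have hU : (u q (pairOf i).1)^2 + (u q (pairOf i).2)^2 ≤ 1 := by
        nlinarith [sq_nonneg (u q i)]
      exact key_contra ((1:ℝ)/(2*4^k)) ((1:ℝ)/(10*4^k)) (Δ i) (Δ (pairOf i).1)
        (Δ (pairOf i).2) (u q i) (u q (pairOf i).1) (u q (pairOf i).2) Sv
        (by field_simp; ring) (by positivity)
        (by rw [← hDsum]; exact hεD)
        (by rw [← hDsum]; exact hSle)
        hSdef hUi hU hca hcb
  -- sum up
  have hKmem : ∀ q ∈ N, kf q ∈ Finset.range (K+1) := fun q hq =>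
    Finset.mem_range.mpr (Nat.lt_succ_of_le (hdyadic q hq).2.2)
  have hcard : N.card = ∑ k ∈ Finset.range (K+1), (N.filter fun q => kf q = k).card :=
    Finset.card_eq_sum_card_fiberwise hKmem
  have h2K : (2:ℝ)^K ≤ r := by
    have hfl : 1 ≤ ⌊r⌋₊ := Nat.le_floor (by exact_mod_cast hr)
    calc ((2:ℝ))^K = ((2^K : ℕ) : ℝ) := by push_cast; ring
      _ ≤ (⌊r⌋₊ : ℝ) := by exact_mod_cast Nat.pow_log_le_self 2 (by omega)
      _ ≤ r := Nat.floor_le (by linarith)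
  calc (N.card : ℝ) = ∑ k ∈ Finset.range (K+1),
        ((N.filter fun q => kf q = k).card : ℝ) := by rw [hcard]; push_cast; ring
    _ ≤ ∑ k ∈ Finset.range (K+1), 15092736 * (4:ℝ)^k := by
        apply Finset.sum_le_sum
        intro k _
        have h1 := hfiber k
        have h2 : ((14739 * (20 * 2^k + 1)^2 : ℕ) : ℝ) ≤ 15092736 * (4:ℝ)^k := by
          push_cast
          have h3 : (20 * (2:ℝ)^k + 1) ≤ 32 * 2^k := by
            have : (1:ℝ) ≤ 2^k := one_le_pow₀ (by norm_num)
            linarith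
          have h4 : (0:ℝ) ≤ 20 * (2:ℝ)^k + 1 := by positivity
          have h5 : (20 * (2:ℝ)^k + 1)^2 ≤ (32 * 2^k)^2 := by nlinarith
          have h6 : (32 * (2:ℝ)^k)^2 = 1024 * 4^k := by
            rw [mul_pow, ← pow_mul, (by norm_num : (4:ℝ) = 2^2), ← pow_mul]
            ring_nf
          nlinarith [h5, h6]
        calc ((N.filter fun q => kf q = k).card : ℝ)
            ≤ ((14739 * (20 * 2^k + 1)^2 : ℕ) : ℝ) := by exact_mod_cast h1
          _ ≤ 15092736 * (4:ℝ)^k := h2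
    _ = 15092736 * ((4:ℝ)^(K+1) - 1) / (4 - 1) := by
        rw [← Finset.mul_sum, geom_sum_eq (by norm_num : (4:ℝ) ≠ 1)]
        ring
    _ ≤ 10^8 * r^2 := by
        have h4K : (4:ℝ)^K ≤ r^2 := by
          have : (4:ℝ)^K = ((2:ℝ)^K)^2 := by
            rw [← pow_mul, (by norm_num : (4:ℝ) = 2^2), ← pow_mul]; ring_nf
          rw [this]
          have h0 : (0:ℝ) ≤ 2^K := by positivity
          nlinarith [h2K]
        have h41 : (4:ℝ)^(K+1) = 4 * 4^K := by ring
        nlinarith [h4K]
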